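/- Let q : ℝ² → M_{k×(n−k)}(ℂ) be smooth, and let u = [[0, q],[−q*, 0]] and Q₂ = [[−i q q*, i q_x],[i q_x*, i q* q]] be the associated block matrices in u(n). Then u satisfies u_t = (Q₂)_x + [u, Q₂] identically if and only if for every λ ∈ ℂ the zero-curvature equation ∂_x(aλ² + uλ + Q₂) − ∂_t(aλ + u) + [aλ + u, aλ² + uλ + Q₂] = 0 holds identically in (x,t), where a = (i/2)·diag(I_k, −I_{n−k}). -/

import Mathlib

open Matrix

attribute [local instance] Matrix.normedAddCommGroup Matrix.normedSpace

set_option linter.unusedSectionVars false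

noncomputable instance clmMatNAG {E : Type*} [NormedAddCommGroup E] [NormedSpace ℝ E]
    {p r : Type*} [Fintype p] [Fintype r] :
    NormedAddCommGroup (E →L[ℝ] Matrix p r ℂ) := by
  exact ContinuousLinearMap.toNormedAddCommGroup

noncomputable instance clmMatNS {E : Type*} [NormedAddCommGroup E] [NormedSpace ℝ E]
    {p r : Type*} [Fintype p] [Fintype r] :
    NormedSpace ℝ (E →L[ℝ] Matrix p r ℂ) := by
  exact ContinuousLinearMap.toNormedSpace

noncomputable instance clmMatMatNAG {a b p r : Type*} [Fintype a] [Fintype b] [Fintype p]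
    [Fintype r] : NormedAddCommGroup (Matrix a b ℂ →L[ℝ] Matrix p r ℂ) := by
  exact ContinuousLinearMap.toNormedAddCommGroup

noncomputable instance clmMatMatNS {a b p r : Type*} [Fintype a] [Fintype b] [Fintype p]
    [Fintype r] : NormedSpace ℝ (Matrix a b ℂ →L[ℝ] Matrix p r ℂ) := by
  exact ContinuousLinearMap.toNormedSpace

section aux
variable {l m n o : Type*} [Fintype l] [Fintype m] [Fintype n] [Fintype o]
  [DecidableEq l] [DecidableEq m] [DecidableEq n] [DecidableEq o]

noncomputable def ctL : Matrix m n ℂ →L[ℝ] Matrix n m ℂ :=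
  LinearMap.toContinuousLinearMap
  { toFun := fun A => Aᴴ
    map_add' := fun A B => Matrix.conjTranspose_add A B
    map_smul' := fun r A => by
      ext i j
      simp [Matrix.conjTranspose_apply, Matrix.smul_apply, star_smul] }

@[simp] lemma ctL_apply (A : Matrix m n ℂ) : ctL A = Aᴴ := rfl

theorem DifferentiableAt.matMul {f : ℝ → Matrix l m ℂ} {g : ℝ → Matrix m n ℂ} {x : ℝ}
    (hf : DifferentiableAt ℝ f x) (hg : DifferentiableAt ℝ g x) :
    DifferentiableAt ℝ (fun y => f y * g y) x := by
  let L1 : Matrix l m ℂ →ₗ[ℝ] (Matrix m n ℂ →L[ℝ] Matrix l n ℂ) :=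
  { toFun := fun A => LinearMap.toContinuousLinearMap
      { toFun := fun B => A * B
        map_add' := fun B C => Matrix.mul_add A B C
        map_smul' := fun r B => Matrix.mul_smul A r B }
    map_add' := fun A A' => by ext B i j; simp [Matrix.add_mul]
    map_smul' := fun r A => by ext B i j; simp [Matrix.smul_mul] }
  have h1 := DifferentiableAt.comp (G := Matrix m n ℂ →L[ℝ] Matrix l n ℂ) x
    L1.toContinuousLinearMap.differentiable.differentiableAt hf
  exact (h1.clm_apply hg :)

noncomputable def fbL : (Matrix n l ℂ × Matrix n m ℂ × Matrix o l ℂ × Matrix o m ℂ) →L[ℝ]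
    Matrix (n ⊕ o) (l ⊕ m) ℂ :=
  LinearMap.toContinuousLinearMap
  { toFun := fun p => Matrix.fromBlocks p.1 p.2.1 p.2.2.1 p.2.2.2
    map_add' := fun p q => by simp [Matrix.fromBlocks_add]
    map_smul' := fun r p => by simp [Matrix.fromBlocks_smul] }

@[simp] lemma fbL_apply (A : Matrix n l ℂ) (B : Matrix n m ℂ) (C : Matrix o l ℂ)
    (D : Matrix o m ℂ) : fbL (A, B, C, D) = Matrix.fromBlocks A B C D := rfl

end aux

/-- For smooth `q : ℝ² → M_{k×(n−k)}(ℂ)` with associated block matrices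
`u = [[0,q],[−q*,0]]` and `Q₂ = [[−iqq*, iq_x],[iq_x*, iq*q]]`, `u` satisfies
`u_t = (Q₂)_x + [u, Q₂]` iff for every `λ ∈ ℂ` the zero-curvature equation
`∂_x(aλ² + uλ + Q₂) − ∂_t(aλ + u) + [aλ + u, aλ² + uλ + Q₂] = 0` holds identically,
where `a = (i/2)·diag(I_k, −I_{n−k})`. -/
theorem stmt2 (k m : ℕ) (hk : 0 < k) (hm : 0 < m)
    (a : Matrix (Fin k ⊕ Fin m) (Fin k ⊕ Fin m) ℂ)
    (ha : a = (Complex.I / 2) • Matrix.fromBlocks 1 0 0 (-1))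
    (q : ℝ → ℝ → Matrix (Fin k) (Fin m) ℂ)
    (hq : ContDiff ℝ (⊤ : ℕ∞) fun p : ℝ × ℝ => q p.1 p.2)
    -- partial derivatives of q
    (qx : ℝ → ℝ → Matrix (Fin k) (Fin m) ℂ)
    (hqx : ∀ x t, qx x t = deriv (fun y => q y t) x)
    -- the associated block matrices u and Q₂
    (u Q₂ : ℝ → ℝ → Matrix (Fin k ⊕ Fin m) (Fin k ⊕ Fin m) ℂ)
    (hu : ∀ x t, u x t = Matrix.fromBlocks 0 (q x t) (-(q x t)ᴴ) 0)
    (hQ₂ : ∀ x t, Q₂ x t = Matrix.fromBlocks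
        ((-Complex.I) • (q x t * (q x t)ᴴ)) (Complex.I • qx x t)
        (Complex.I • (qx x t)ᴴ) (Complex.I • ((q x t)ᴴ * q x t))) :
    -- u_t = (Q₂)_x + [u, Q₂]
    (∀ x t, deriv (fun s => u x s) t
        = deriv (fun y => Q₂ y t) x + (u x t * Q₂ x t - Q₂ x t * u x t))
    ↔
    -- zero-curvature equation for every λ
    (∀ lam : ℂ, ∀ x t : ℝ,
      deriv (fun y => lam ^ 2 • a + lam • u y t + Q₂ y t) x
        - deriv (fun s => lam • a + u x s) t
        + ((lam • a + u x t) * (lam ^ 2 • a + lam • u x t + Q₂ x t)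
            - (lam ^ 2 • a + lam • u x t + Q₂ x t) * (lam • a + u x t))
      = 0) := by
  set f : ℝ × ℝ → Matrix (Fin k) (Fin m) ℂ := fun p => q p.1 p.2 with hf_def
  have hf : ContDiff ℝ (⊤ : ℕ∞) f := hq
  have hfdiff : Differentiable ℝ f := hf.differentiable (by simp)
  have hfd : ContDiff ℝ (⊤ : ℕ∞) (fderiv ℝ f) := (contDiff_infty_iff_fderiv.mp hf).2
  -- differentiability / derivative of q in x
  have hqd : ∀ x t : ℝ, HasDerivAt (fun y => q y t) (fderiv ℝ f (x, t) (1, 0)) x := by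
    intro x t
    exact ((hfdiff (x, t)).hasFDerivAt).comp_hasDerivAt x
      (HasDerivAt.prodMk (hasDerivAt_id x) (hasDerivAt_const x t))
  have hFq : ∀ x t : ℝ, qx x t = fderiv ℝ f (x, t) (1, 0) := fun x t => by
    rw [hqx]; exact (hqd x t).deriv
  have hqd' : ∀ x t : ℝ, HasDerivAt (fun y => q y t) (qx x t) x := fun x t => by
    rw [hFq]; exact hqd x t
  -- differentiability of qx in x
  have hqxdiff : ∀ x t : ℝ, DifferentiableAt ℝ (fun y => qx y t) x := by
    intro x t
    have he : (fun y => qx y t)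
        = fun y => (ContinuousLinearMap.apply ℝ (Matrix (Fin k) (Fin m) ℂ)
            ((1 : ℝ), (0 : ℝ))) (fderiv ℝ f (y, t)) := by
      funext y; exact hFq y t
    rw [he]
    have hin : DifferentiableAt ℝ (fun y : ℝ => fderiv ℝ f (y, t)) x := by
      have := ((hfd.differentiable (by simp)) (x, t)).comp x
        (HasDerivAt.prodMk (hasDerivAt_id x) (hasDerivAt_const x t)).differentiableAt
      exact this
    have := ((ContinuousLinearMap.apply ℝ (Matrix (Fin k) (Fin m) ℂ)
        ((1 : ℝ), (0 : ℝ))).differentiable.differentiableAt).comp x hin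
    exact this
  -- derivative of u in x
  have hdu : ∀ x t : ℝ, HasDerivAt (fun y => u y t)
      (Matrix.fromBlocks 0 (qx x t) (-(qx x t)ᴴ) 0) x := by
    intro x t
    have he : (fun y => u y t) = fun y => fbL ((0 : Matrix (Fin k) (Fin k) ℂ), q y t,
        -(ctL (q y t)), (0 : Matrix (Fin m) (Fin m) ℂ)) := by
      funext y; simp [hu]
    rw [he]
    have h1 : HasDerivAt (fun y => ((0 : Matrix (Fin k) (Fin k) ℂ), q y t,
        -(ctL (q y t)), (0 : Matrix (Fin m) (Fin m) ℂ)))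
        ((0 : Matrix (Fin k) (Fin k) ℂ), qx x t, -(ctL (qx x t)),
          (0 : Matrix (Fin m) (Fin m) ℂ)) x :=
      HasDerivAt.prodMk (hasDerivAt_const x _) (HasDerivAt.prodMk (hqd' x t)
        (HasDerivAt.prodMk (by exact ((ctL.hasFDerivAt.comp_hasDerivAt x (hqd' x t)).neg :) :
          HasDerivAt (fun y => -(ctL (q y t))) (-(ctL (qx x t))) x) (hasDerivAt_const x _)))
    exact (fbL.hasFDerivAt.comp_hasDerivAt x h1 :)
  -- differentiability of Q₂ in x
  have hdQ : ∀ x t : ℝ, DifferentiableAt ℝ (fun y => Q₂ y t) x := by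
    intro x t
    have he : (fun y => Q₂ y t) = fun y => fbL
        ((-Complex.I) • (q y t * (q y t)ᴴ), Complex.I • qx y t,
         Complex.I • (ctL (qx y t)), Complex.I • ((ctL (q y t)) * q y t)) := by
      funext y; simp [hQ₂]
    rw [he]
    have hqD : DifferentiableAt ℝ (fun y => q y t) x := (hqd' x t).differentiableAt
    have hctq : DifferentiableAt ℝ (fun y => ctL (q y t)) x := by
      exact ((ctL.differentiable.differentiableAt).comp x hqD :)
    have hctqx : DifferentiableAt ℝ (fun y => ctL (qx y t)) x := by
      exact ((ctL.differentiable.differentiableAt).comp x (hqxdiff x t) :)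
    have h11 : DifferentiableAt ℝ (fun y => (-Complex.I) • (q y t * (q y t)ᴴ)) x := by
      have : DifferentiableAt ℝ (fun y => q y t * (ctL (q y t))) x := hqD.matMul hctq
      exact (this.const_smul (-Complex.I) :)
    have h12 : DifferentiableAt ℝ (fun y => Complex.I • qx y t) x :=
      (hqxdiff x t).const_smul Complex.I
    have h21 : DifferentiableAt ℝ (fun y => Complex.I • (ctL (qx y t))) x :=
      hctqx.const_smul Complex.I
    have h22 : DifferentiableAt ℝ (fun y => Complex.I • ((ctL (q y t)) * q y t)) x :=
      (hctq.matMul hqD).const_smul Complex.I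
    exact (fbL.differentiable.differentiableAt).comp x
      (DifferentiableAt.prodMk h11 (DifferentiableAt.prodMk h12 (DifferentiableAt.prodMk h21 h22)))
  -- key identity: u_x = Q₂ a - a Q₂
  have key : ∀ x t : ℝ, Matrix.fromBlocks 0 (qx x t) (-(qx x t)ᴴ) 0
      = Q₂ x t * a - a * Q₂ x t := by
    intro x t
    rw [hQ₂, ha]
    ext (i | i) (j | j) <;>
      simp [Matrix.mul_smul, Matrix.smul_mul, Matrix.fromBlocks_multiply,
        Matrix.smul_apply, Matrix.sub_apply, Matrix.neg_apply, Matrix.mul_apply,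
        Complex.I_sq] <;>
      ring_nf <;>
      simp [Complex.I_sq] <;> ring
  constructor
  · intro H lam x t
    have hD1 : deriv (fun y => lam ^ 2 • a + lam • u y t + Q₂ y t) x
        = lam • Matrix.fromBlocks 0 (qx x t) (-(qx x t)ᴴ) 0 + deriv (fun y => Q₂ y t) x := by
      have h := (((hasDerivAt_const x (lam ^ 2 • a)).add ((hdu x t).const_smul lam)).add
        (hdQ x t).hasDerivAt).deriv
      exact h.trans (by rw [zero_add]; exact rfl)
    have hD2 : deriv (fun s => lam • a + u x s) t = deriv (fun s => u x s) t :=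
      deriv_const_add _
    rw [hD1, hD2, H x t, key x t]
    simp only [mul_add, add_mul, smul_mul_assoc, mul_smul_comm, smul_smul]
    module
  · intro H x t
    have h0 := H 0 x t
    simp only [ne_eq, OfNat.ofNat_ne_zero, not_false_eq_true, zero_pow, zero_smul,
      zero_add] at h0
    -- h0 : deriv (fun y => Q₂ y t) x - deriv (fun s => u x s) t
    --        + (u x t * Q₂ x t - Q₂ x t * u x t) = 0
    linear_combination (norm := abel) -h0
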